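/- Let N ≥ 2, let q_1,…,q_N ∈ ℂ be pairwise distinct, let z, η ∈ ℂ with z ≠ 0, η ≠ 0, and q_i − q_j + η ≠ 0 for all i, j. Define L^η(z) ∈ Mat_N(ℂ) by L^η_{ij}(z) = η·( 1/(q_i − q_j + η) − 1/(N·z) )·∏_{k≠j} (q_j − q_k − η)/(q_j − q_k). Then the factorization g(z,q)·L^η(z) = g(z−η, q) holds; equivalently, when g(z,q) is invertible, L^η(z) = g(z,q)^{−1}·g(z−η,q). -/

import Mathlib

open Matrix Finset
open scoped Kronecker

noncomputable section

/-- `ρ(i)`: in 1-based terms ρ(i) = i−1 for 1 ≤ i ≤ N−1 and ρ(N) = N. -/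
def rho (N : ℕ) (i : Fin N) : ℕ := if (i : ℕ) = N - 1 then N else (i : ℕ)

/-- `q̄_j = q_j − (1/N)·Σ_k q_k`. -/
def qbar (N : ℕ) (q : Fin N → ℂ) (j : Fin N) : ℂ := q j - (∑ k, q k) / N

/-- The generalized Vandermonde matrix `Ξ(z,q)` with entries `(z + q̄_j)^{ρ(i)}`. -/
def Xi (N : ℕ) (z : ℂ) (q : Fin N → ℂ) : Matrix (Fin N) (Fin N) ℂ :=
  Matrix.of fun i j => (z + qbar N q j) ^ rho N i

/-- The diagonal matrix `D(q)` with `D_{ii}(q) = ∏_{k≠i}(q_i − q_k)`. -/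
def Dmat (N : ℕ) (q : Fin N → ℂ) : Matrix (Fin N) (Fin N) ℂ :=
  Matrix.diagonal fun i => ∏ k ∈ Finset.univ.erase i, (q i - q k)

/-- The IRF-Vertex transformation matrix `g(z,q) = Ξ(z,q)·D(q)⁻¹`. -/
def gmat (N : ℕ) (z : ℂ) (q : Fin N → ℂ) : Matrix (Fin N) (Fin N) ℂ :=
  Xi N z q * (Dmat N q)⁻¹

/-- The matrix `L^η(z)` with entries
`L^η_{ij}(z) = η·(1/(q_i−q_j+η) − 1/(N·z))·∏_{k≠j}(q_j−q_k−η)/(q_j−q_k)`. -/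
def Lmat (N : ℕ) (eta z : ℂ) (q : Fin N → ℂ) : Matrix (Fin N) (Fin N) ℂ :=
  Matrix.of fun i j =>
    eta * (1 / (q i - q j + eta) - 1 / ((N : ℂ) * z)) *
      ∏ k ∈ Finset.univ.erase j, ((q j - q k - eta) / (q j - q k))

section KeyAux
open Finset Polynomial

lemma key_poly (N : ℕ) (hN : 0 < N) (x : Fin N → ℂ) (hx : Function.Injective x)
    (p : ℕ) (hp : p ≤ N) :
    (∑ j, C (x j ^ p * (∏ k ∈ univ.erase j, (x j - x k))⁻¹) *
      ∏ k ∈ univ.erase j, (X - C (x k))) =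
    X ^ p - (if p = N then ∏ k, (X - C (x k)) else 0) := by
  have hcard : (univ : Finset (Fin N)).card = N := by simp
  have hdegE : ∀ j : Fin N, (∏ k ∈ univ.erase j, (X - C (x k))).degree
      = ((N - 1 : ℕ) : WithBot ℕ) := by
    intro j
    rw [Polynomial.degree_prod]
    simp [Polynomial.degree_X_sub_C, Finset.card_erase_of_mem, hcard]
  have hmon : (∏ k : Fin N, (X - C (x k))).Monic :=
    monic_prod_of_monic _ _ fun k _ => monic_X_sub_C (x k)
  have hdegP : (∏ k : Fin N, (X - C (x k))).degree = (N : WithBot ℕ) := by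
    rw [Polynomial.degree_prod]
    simp [Polynomial.degree_X_sub_C, hcard]
  apply Polynomial.eq_of_degrees_lt_of_eval_index_eq (univ : Finset (Fin N))
    (Set.injOn_of_injective hx)
  · -- degree LHS < N
    apply lt_of_le_of_lt (Polynomial.degree_sum_le _ _)
    rw [hcard]
    apply (Finset.sup_lt_iff (by exact_mod_cast WithBot.bot_lt_coe N)).mpr
    intro j _
    apply lt_of_le_of_lt (Polynomial.degree_mul_le _ _)
    calc (C (x j ^ p * (∏ k ∈ univ.erase j, (x j - x k))⁻¹)).degree
          + (∏ k ∈ univ.erase j, (X - C (x k))).degree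
        ≤ 0 + ((N - 1 : ℕ) : WithBot ℕ) :=
          add_le_add Polynomial.degree_C_le (le_of_eq (hdegE j))
      _ < (N : WithBot ℕ) := by
          rw [zero_add]
          exact_mod_cast Nat.sub_lt hN one_pos
  · -- degree RHS < N
    rw [hcard]
    by_cases hpN : p = N
    · rw [if_pos hpN, hpN]
      have h := Polynomial.degree_sub_lt
        (p := (X : ℂ[X]) ^ N) (q := ∏ k : Fin N, (X - C (x k)))
        (by rw [Polynomial.degree_X_pow, hdegP])
        (pow_ne_zero _ Polynomial.X_ne_zero)
        (by rw [Polynomial.leadingCoeff_X_pow, hmon.leadingCoeff])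
      rwa [Polynomial.degree_X_pow] at h
    · rw [if_neg hpN, sub_zero, Polynomial.degree_X_pow]
      exact_mod_cast Nat.lt_of_le_of_ne hp hpN
  · -- evals agree
    intro m _
    rw [Polynomial.eval_finset_sum]
    rw [Finset.sum_eq_single_of_mem m (Finset.mem_univ m)]
    · have hD : (∏ k ∈ univ.erase m, (x m - x k)) ≠ 0 := by
        apply Finset.prod_ne_zero_iff.mpr
        intro k hk
        exact sub_ne_zero_of_ne fun h => (Finset.mem_erase.mp hk).1 (hx h.symm)
      have hPm : Polynomial.eval (x m) (∏ k : Fin N, (X - C (x k))) = 0 := by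
        rw [Polynomial.eval_prod]
        exact Finset.prod_eq_zero (Finset.mem_univ m) (by simp)
      simp only [Polynomial.eval_mul, Polynomial.eval_C, Polynomial.eval_sub,
        Polynomial.eval_pow, Polynomial.eval_X, Polynomial.eval_prod]
      rw [mul_assoc, inv_mul_cancel₀ hD, mul_one]
      split_ifs with h
      · have h0 : ∏ k : Fin N, (x m - x k) = 0 :=
          Finset.prod_eq_zero (Finset.mem_univ m) (by simp)
        simp only [Polynomial.eval_prod, Polynomial.eval_sub, Polynomial.eval_X,
          Polynomial.eval_C] at hPm ⊢
        rw [hPm, sub_zero]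
      · simp
    · intro j _ hj
      simp only [Polynomial.eval_mul, Polynomial.eval_prod, Polynomial.eval_sub,
        Polynomial.eval_X, Polynomial.eval_C]
      apply mul_eq_zero_of_right
      exact Finset.prod_eq_zero
        (Finset.mem_erase.mpr ⟨fun h => hj (h ▸ rfl), Finset.mem_univ m⟩) (by simp)

lemma key_eval (N : ℕ) (hN : 0 < N) (x : Fin N → ℂ) (hx : Function.Injective x)
    (p : ℕ) (hp : p ≤ N) (t : ℂ) :
    ∑ j, x j ^ p * (∏ k ∈ univ.erase j, (x j - x k))⁻¹ * ∏ k ∈ univ.erase j, (t - x k)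
    = t ^ p - (if p = N then ∏ k, (t - x k) else 0) := by
  have h := congrArg (Polynomial.eval t) (key_poly N hN x hx p hp)
  simp only [Polynomial.eval_finset_sum, Polynomial.eval_mul, Polynomial.eval_C,
    Polynomial.eval_sub, Polynomial.eval_pow, Polynomial.eval_X, Polynomial.eval_prod,
    apply_ite (Polynomial.eval t), Polynomial.eval_zero] at h
  simpa [mul_assoc] using h

lemma key_coeff (N : ℕ) (hN : 0 < N) (x : Fin N → ℂ) (hx : Function.Injective x)
    (p : ℕ) (hp : p ≤ N) :
    ∑ j, x j ^ p * (∏ k ∈ univ.erase j, (x j - x k))⁻¹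
    = (if N - 1 = p then 1 else 0) + (if p = N then ∑ k, x k else 0) := by
  have h := congrArg (fun f => Polynomial.coeff f (N - 1)) (key_poly N hN x hx p hp)
  have hE : ∀ j : Fin N, (∏ k ∈ univ.erase j, ((Polynomial.X : Polynomial ℂ)
      - Polynomial.C (x k))).coeff (N - 1) = 1 := by
    intro j
    have hmon : (∏ k ∈ univ.erase j, ((Polynomial.X : Polynomial ℂ)
        - Polynomial.C (x k))).Monic :=
      Polynomial.monic_prod_of_monic _ _ fun k _ => Polynomial.monic_X_sub_C (x k)
    have hnd : (∏ k ∈ univ.erase j, ((Polynomial.X : Polynomial ℂ)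
        - Polynomial.C (x k))).natDegree = N - 1 := by
      rw [Polynomial.natDegree_prod_of_monic _ _ fun k _ => Polynomial.monic_X_sub_C (x k)]
      simp [Polynomial.natDegree_X_sub_C, Finset.card_erase_of_mem]
    rw [← hnd]
    exact hmon.coeff_natDegree
  rw [Polynomial.finset_sum_coeff] at h
  simp only [Polynomial.coeff_C_mul, hE, mul_one] at h
  rw [Polynomial.coeff_sub, Polynomial.coeff_X_pow] at h
  have hP : (∏ k : Fin N, ((Polynomial.X : Polynomial ℂ) - Polynomial.C (x k))).coeff (N - 1)
      = -∑ k, x k := by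
    have := Polynomial.prod_X_sub_C_coeff_card_pred (univ : Finset (Fin N)) x (by simpa using hN)
    simpa using this
  rw [apply_ite (fun f => Polynomial.coeff f (N - 1)), hP, Polynomial.coeff_zero] at h
  rw [h]
  split_ifs <;> ring

end KeyAux

/-- Factorization property: `g(z,q)·L^η(z) = g(z−η,q)`. -/
theorem gmat_factorization (N : ℕ) (hN : 2 ≤ N) (q : Fin N → ℂ)
    (hq : Function.Injective q) (z eta : ℂ) (hz : z ≠ 0) (heta : eta ≠ 0)
    (hqe : ∀ i j : Fin N, q i - q j + eta ≠ 0) :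
    gmat N z q * Lmat N eta z q = gmat N (z - eta) q := by
  have hN0 : 0 < N := lt_of_lt_of_le two_pos hN
  have hNc : (N : ℂ) ≠ 0 := Nat.cast_ne_zero.mpr hN0.ne'
  have hNz : (N : ℂ) * z ≠ 0 := mul_ne_zero hNc hz
  set x : Fin N → ℂ := fun j => z + qbar N q j with hxdef
  have hdiff : ∀ j k : Fin N, x j - x k = q j - q k := by
    intro j k; simp only [hxdef, qbar]; ring
  have hx : Function.Injective x := by
    intro j k h
    apply hq
    have h2 := hdiff j k
    rw [h, sub_self] at h2
    exact sub_eq_zero.mp h2.symm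
  have hsum : ∑ k, x k = (N : ℂ) * z := by
    simp only [hxdef, qbar]
    rw [Finset.sum_add_distrib, Finset.sum_sub_distrib, Finset.sum_const, Finset.card_univ,
      Fintype.card_fin, nsmul_eq_mul]
    field_simp
    rw [Finset.sum_const, Finset.card_univ, Fintype.card_fin, nsmul_eq_mul]
    field_simp
    ring
  set d : Fin N → ℂ := fun j => (∏ k ∈ univ.erase j, (x j - x k))⁻¹ with hddef
  have hprodq : ∀ j : Fin N, ∏ k ∈ univ.erase j, (q j - q k) = ∏ k ∈ univ.erase j, (x j - x k) :=
    fun j => Finset.prod_congr rfl fun k _ => (hdiff j k).symm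
  have hDne : ∀ j : Fin N, (∏ k ∈ univ.erase j, (x j - x k)) ≠ 0 := by
    intro j
    apply Finset.prod_ne_zero_iff.mpr
    intro k hk
    exact sub_ne_zero_of_ne fun h => (Finset.mem_erase.mp hk).1 (hx h.symm)
  have hDinv : (Dmat N q)⁻¹ = Matrix.diagonal d := by
    apply Matrix.inv_eq_right_inv
    have hfun : (fun i => (∏ k ∈ univ.erase i, (q i - q k)) * d i) = fun _ : Fin N => (1 : ℂ) := by
      funext j
      rw [hprodq j]
      exact mul_inv_cancel₀ (hDne j)
    rw [Dmat, Matrix.diagonal_mul_diagonal, hfun, Matrix.diagonal_one]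
  ext i m
  set p : ℕ := rho N i with hpdef
  have hple : p ≤ N := by
    rw [hpdef, rho]
    split_ifs
    · exact le_refl N
    · exact (Nat.lt_of_lt_of_le i.isLt (le_refl N)).le
  have hpne : N - 1 ≠ p := by
    rw [hpdef, rho]
    split_ifs with h
    · omega
    · omega
  set t : ℂ := x m - eta with htdef
  set Q : ℂ := ∏ k ∈ univ.erase m, (t - x k) with hQdef
  have hxt : ∀ j : Fin N, x j - t = q j - q m + eta := by
    intro j
    rw [htdef, ← hdiff j m]; ring
  have hxtne : ∀ j : Fin N, x j - t ≠ 0 := fun j => (hxt j) ▸ hqe j m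
  have htx : ∀ k : Fin N, t - x k = q m - q k - eta := by
    intro k
    rw [htdef, ← hdiff m k]; ring
  have hprodid : ∀ j : Fin N, ∏ k ∈ univ.erase j, (t - x k) = eta * Q * (x j - t)⁻¹ := by
    intro j
    by_cases hjm : j = m
    · subst hjm
      have hxm : x j - t = eta := by rw [htdef]; ring
      rw [hxm]
      have h2 : eta * eta⁻¹ = 1 := mul_inv_cancel₀ heta
      linear_combination (-Q) * h2
    · have hm : m ∈ univ.erase j := Finset.mem_erase.mpr ⟨fun h => hjm h.symm, Finset.mem_univ m⟩
      have hj : j ∈ univ.erase m := Finset.mem_erase.mpr ⟨hjm, Finset.mem_univ j⟩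
      have htm : t - x m = -eta := by rw [htdef]; ring
      have h2 : (x j - t) * (x j - t)⁻¹ = 1 := mul_inv_cancel₀ (hxtne j)
      rw [← Finset.mul_prod_erase _ _ hm, Finset.erase_right_comm, hQdef,
        ← Finset.mul_prod_erase _ _ hj, htm]
      set R : ℂ := ∏ k ∈ (univ.erase m).erase j, (t - x k) with hR
      linear_combination eta * R * h2
  -- entry computation
  show (gmat N z q * Lmat N eta z q) i m = gmat N (z - eta) q i m
  rw [gmat, gmat, hDinv, Matrix.mul_diagonal, Matrix.mul_apply]
  simp only [Matrix.mul_diagonal]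
  have hXi : ∀ (w : ℂ) (j : Fin N), Xi N w q i j = (w + qbar N q j) ^ p := fun w j => rfl
  have hXiz : ∀ j : Fin N, Xi N z q i j = x j ^ p := fun j => rfl
  have hXiz' : Xi N (z - eta) q i m = t ^ p := by
    rw [hXi (z - eta) m, htdef, hxdef]
    ring_nf
  rw [hXiz']
  have hLprod : ∏ k ∈ univ.erase m, ((q m - q k - eta) / (q m - q k)) = Q * d m := by
    rw [Finset.prod_div_distrib, hQdef, hddef]
    congr 1
    · exact Finset.prod_congr rfl fun k _ => (htx k).symm
    · rw [hprodq m]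
  have hterm : ∀ j : Fin N, Xi N z q i j * d j * Lmat N eta z q j m
      = (x j ^ p * d j * ∏ k ∈ univ.erase j, (t - x k)) * d m
        - eta * ((N : ℂ) * z)⁻¹ * Q * d m * (x j ^ p * d j) := by
    intro j
    rw [hXiz j, Lmat, Matrix.of_apply, hLprod]
    rw [hprodid j]
    have h1 : (1 : ℂ) / (q j - q m + eta) = (x j - t)⁻¹ := by rw [hxt j, one_div]
    rw [h1, one_div]
    field_simp
  rw [Finset.sum_congr rfl fun j _ => hterm j, Finset.sum_sub_distrib, ← Finset.sum_mul,
    ← Finset.mul_sum, key_eval N hN0 x hx p hple t, key_coeff N hN0 x hx p hple,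
    if_neg hpne, hsum]
  have hPt : ∏ k, (t - x k) = -eta * Q := by
    rw [← Finset.mul_prod_erase _ _ (Finset.mem_univ m), ← hQdef]
    have : t - x m = -eta := by rw [htdef]; ring
    rw [this]
  rw [hPt]
  split_ifs with hpN
  · field_simp
    ring
  · ring
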